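/- In the DGA Λ(α,β,γ,η) on four degree-1 generators with dα = dβ = 0, dγ = −αβ, dη = βγ, the Massey product ⟨[β],[α],[α]⟩ is defined (since [β][α] = −[αβ] = [−dγ] = 0 and [α][α] = 0) and is represented by [γα], which is nonzero in H² modulo [β]H¹ + H¹[α]. -/

import Mathlib

/-- A graded-commutative differential graded algebra over ℝ: an ℝ-algebra equipped with
a grading by submodules `deg i`, and a differential `d` of degree +1 squaring to zero,
satisfying the Leibniz rule and graded commutativity on homogeneous elements. -/
structure GCDGA (A : Type) [Ring A] [Algebra ℝ A] where
  deg : ℕ → Submodule ℝ A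
  one_mem : (1 : A) ∈ deg 0
  mul_mem : ∀ {i j : ℕ} {a b : A}, a ∈ deg i → b ∈ deg j → a * b ∈ deg (i + j)
  d : A →ₗ[ℝ] A
  d_d : ∀ a : A, d (d a) = 0
  d_mem : ∀ {i : ℕ} {a : A}, a ∈ deg i → d a ∈ deg (i + 1)
  leibniz : ∀ {i : ℕ} (a b : A), a ∈ deg i →
    d (a * b) = d a * b + ((-1 : ℝ) ^ i) • (a * d b)
  gcomm : ∀ {i j : ℕ} (a b : A), a ∈ deg i → b ∈ deg j →
    a * b = ((-1 : ℝ) ^ (i * j)) • (b * a)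

/-- In the free graded-commutative DGA Λ(α,β,γ,η) on four degree-1
generators with dα = dβ = 0, dγ = −αβ, dη = βγ (the minimal model of the 4-dimensional
nilmanifold E), the Massey product ⟨[β],[α],[α]⟩ is defined (βα = dγ and αα = 0) and is
represented by γα, which is nonzero in H² modulo the indeterminacy [β]H¹ + H¹[α]. -/
theorem nilmanifold4_massey_nontrivial {A : Type} [Ring A] [Algebra ℝ A] (D : GCDGA A)
    (α β γ η : A)
    (hα : α ∈ D.deg 1) (hβ : β ∈ D.deg 1) (hγ : γ ∈ D.deg 1) (hη : η ∈ D.deg 1)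
    (dα : D.d α = 0) (dβ : D.d β = 0) (dγ : D.d γ = -(α * β)) (dη : D.d η = β * γ)
    (hfree : LinearIndependent ℝ
      ![(1 : A), α, β, γ, η,
        α * β, α * γ, α * η, β * γ, β * η, γ * η,
        α * β * γ, α * β * η, α * γ * η, β * γ * η,
        α * β * γ * η])
    (hspan : Submodule.span ℝ
      (Set.range ![(1 : A), α, β, γ, η,
        α * β, α * γ, α * η, β * γ, β * η, γ * η,
        α * β * γ, α * β * η, α * γ * η, β * γ * η,
        α * β * γ * η]) = ⊤)
    (hdeg0 : D.deg 0 = Submodule.span ℝ {(1 : A)})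
    (hdeg1 : D.deg 1 = Submodule.span ℝ {α, β, γ, η})
    (hdeg2 : D.deg 2 = Submodule.span ℝ {α * β, α * γ, α * η, β * γ, β * η, γ * η})
    (hdeg3 : D.deg 3 = Submodule.span ℝ
      {α * β * γ, α * β * η, α * γ * η, β * γ * η})
    (hdeg4 : D.deg 4 = Submodule.span ℝ {α * β * γ * η})
    (hdeg5 : ∀ n : ℕ, 5 ≤ n → D.deg n = ⊥) :
    -- the Massey product ⟨[β],[α],[α]⟩ is defined, with γ a primitive of βα:
    D.d γ = β * α ∧
    -- [γα] is nonzero in H²: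
    (¬ ∃ b ∈ D.deg 1, γ * α = D.d b) ∧
    -- nontriviality: no defining system gives a representative in [β]H¹ + H¹[α]:
    (∀ ξ w : A, ξ ∈ D.deg 1 → w ∈ D.deg 1 → D.d ξ = β * α → D.d w = α * α →
      ¬ ∃ σ c c' : A, σ ∈ D.deg 1 ∧ c ∈ D.deg 1 ∧ c' ∈ D.deg 1 ∧
        D.d c = 0 ∧ D.d c' = 0 ∧
        β * w + ξ * α = D.d σ + β * c + c' * α) := by
  -- basic graded-commutativity consequences in degree 1
  have ac : ∀ a b : A, a ∈ D.deg 1 → b ∈ D.deg 1 → a * b = -(b * a) := by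
    intro a b ha hb
    have := D.gcomm a b ha hb
    simpa [neg_one_smul] using this
  -- a basis of A
  have bB : Module.Basis (Fin 16) ℝ A :=
    Module.Basis.mk hfree (by rw [hspan])
  have cancel : ∀ (r : ℝ) (x : A), r ≠ 0 → r • x = 0 → x = 0 := by
    intro r x hr h
    haveI := bB.isTorsionFree
    rcases smul_eq_zero.mp h with h' | h'
    · exact absurd h' hr
    · exact h'
  have sq : ∀ a : A, a ∈ D.deg 1 → a * a = 0 := by
    intro a ha
    have h := ac a a ha ha
    have h2 : (2 : ℝ) • (a * a) = 0 := by
      rw [two_smul]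
      nth_rewrite 1 [h]
      exact neg_add_cancel _
    exact cancel 2 _ (by norm_num) h2
  have hβα : β * α = -(α * β) := ac β α hβ hα
  have hγα : γ * α = -(α * γ) := ac γ α hγ hα
  have hηα : η * α = -(α * η) := ac η α hη hα
  have hαα : α * α = 0 := sq α hα
  have hββ : β * β = 0 := sq β hβ
  -- decomposition of degree-1 elements
  have mem1 : ∀ x : A, x ∈ D.deg 1 →
      ∃ a b c e : ℝ, x = a • α + b • β + c • γ + e • η := by
    intro x hx
    rw [hdeg1] at hx
    simp only [Submodule.mem_span_insert, Submodule.mem_span_singleton] at hx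
    obtain ⟨a, _, ⟨b, _, ⟨c, _, ⟨e, rfl⟩, rfl⟩, rfl⟩, rfl⟩ := hx
    exact ⟨a, b, c, e, by module⟩
  -- differential of a degree-1 element
  have dcomp : ∀ a b c e : ℝ,
      D.d (a • α + b • β + c • γ + e • η)
        = c • (-(α * β)) + e • (β * γ) := by
    intro a b c e
    simp [map_add, map_smul, dα, dβ, dγ, dη]
  -- linear independence of the degree-2 monomials
  have indep2 : ∀ c1 c2 c3 c4 c5 c6 : ℝ,
      c1 • (α * β) + c2 • (α * γ) + c3 • (α * η) + c4 • (β * γ)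
        + c5 • (β * η) + c6 • (γ * η) = 0 →
      c1 = 0 ∧ c2 = 0 ∧ c3 = 0 ∧ c4 = 0 ∧ c5 = 0 ∧ c6 = 0 := by
    intro c1 c2 c3 c4 c5 c6 h
    have hli := Fintype.linearIndependent_iff.mp hfree
      ![0, 0, 0, 0, 0, c1, c2, c3, c4, c5, c6, 0, 0, 0, 0, 0]
      (by
        simp only [Fin.sum_univ_succ, Fin.sum_univ_zero, Matrix.cons_val_zero,
          Matrix.cons_val_succ, zero_smul, add_zero, zero_add]
        linear_combination (norm := module) h)
    exact ⟨hli 5, hli 6, hli 7, hli 8, hli 9, hli 10⟩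
  refine ⟨by rw [dγ, hβα], ?_, ?_⟩
  · -- [γα] ≠ 0 in H²
    rintro ⟨b, hb, heq⟩
    obtain ⟨a1, a2, a3, a4, rfl⟩ := mem1 b hb
    rw [dcomp] at heq
    rw [hγα] at heq
    have key : (a3 : ℝ) • (α * β) + (-1 : ℝ) • (α * γ) + (0:ℝ) • (α * η)
        + (-a4) • (β * γ) + (0:ℝ) • (β * η) + (0:ℝ) • (γ * η) = 0 := by
      linear_combination (norm := module) heq
    have := (indep2 _ _ _ _ _ _ key).2.1
    norm_num at this
  · -- nontriviality
    intro ξ w hξ hw hdξ hdw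
    rintro ⟨σ, c, c', hσ, hc, hc', hdc, hdc', heq⟩
    obtain ⟨x1, x2, x3, x4, rfl⟩ := mem1 ξ hξ
    obtain ⟨w1, w2, w3, w4, rfl⟩ := mem1 w hw
    obtain ⟨s1, s2, s3, s4, rfl⟩ := mem1 σ hσ
    obtain ⟨p1, p2, p3, p4, rfl⟩ := mem1 c hc
    obtain ⟨q1, q2, q3, q4, rfl⟩ := mem1 c' hc'
    rw [dcomp] at hdξ hdw hdc hdc' heq
    -- extract coefficients of ξ from dξ = βα
    rw [hβα] at hdξ
    have hξc := indep2 (1 - x3) 0 0 x4 0 0 (by linear_combination (norm := module) hdξ)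
    have hx3 : x3 = 1 := by linarith [hξc.1]
    have hx4 : x4 = 0 := hξc.2.2.2.1
    rw [hαα] at hdw
    have hwc := indep2 (-w3) 0 0 w4 0 0 (by linear_combination (norm := module) hdw)
    have hw3 : w3 = 0 := by linarith [hwc.1]
    have hw4 : w4 = 0 := hwc.2.2.2.1
    have hcc := indep2 (-p3) 0 0 p4 0 0 (by linear_combination (norm := module) hdc)
    have hp3 : p3 = 0 := by linarith [hcc.1]
    have hp4 : p4 = 0 := hcc.2.2.2.1
    have hcc' := indep2 (-q3) 0 0 q4 0 0 (by linear_combination (norm := module) hdc')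
    have hq3 : q3 = 0 := by linarith [hcc'.1]
    have hq4 : q4 = 0 := hcc'.2.2.2.1
    subst hx3 hx4 hw3 hw4 hp3 hp4 hq3 hq4
    -- expand both sides of heq
    have hL : β * (w1 • α + w2 • β + (0:ℝ) • γ + (0:ℝ) • η)
        + (x1 • α + x2 • β + (1:ℝ) • γ + (0:ℝ) • η) * α
        = (-w1 - x2) • (α * β) + (-1 : ℝ) • (α * γ) := by
      have e1 : β * (w1 • α + w2 • β + (0:ℝ) • γ + (0:ℝ) • η)
          = w1 • (β * α) + w2 • (β * β) := by
        simp [mul_add, mul_smul_comm]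
      have e2 : (x1 • α + x2 • β + (1:ℝ) • γ + (0:ℝ) • η) * α
          = x1 • (α * α) + x2 • (β * α) + (1:ℝ) • (γ * α) := by
        simp [add_mul, smul_mul_assoc]
      rw [e1, e2, hβα, hγα, hαα, hββ]
      module
    have hR : s3 • (-(α * β)) + s4 • (β * γ)
        + β * (p1 • α + p2 • β + (0:ℝ) • γ + (0:ℝ) • η)
        + (q1 • α + q2 • β + (0:ℝ) • γ + (0:ℝ) • η) * α
        = (-s3 - p1 - q2) • (α * β) + s4 • (β * γ) := by
      have e1 : β * (p1 • α + p2 • β + (0:ℝ) • γ + (0:ℝ) • η)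
          = p1 • (β * α) + p2 • (β * β) := by
        simp [mul_add, mul_smul_comm]
      have e2 : (q1 • α + q2 • β + (0:ℝ) • γ + (0:ℝ) • η) * α
          = q1 • (α * α) + q2 • (β * α) := by
        simp [add_mul, smul_mul_assoc]
      rw [e1, e2, hβα, hαα, hββ]
      module
    rw [hL] at heq
    rw [hR] at heq
    have key := indep2 (-w1 - x2 + s3 + p1 + q2) (-1) 0 (-s4) 0 0
      (by linear_combination (norm := module) heq)
    have := key.2.1
    norm_num at this
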